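/- Let $D_1\subset D_2\subset\mathbb{R}^n$ be open bounded connected Lipschitz domains, and suppose there are constants $K_1,K_2>0$ such that for every $\mathbf{U}\in H^1(D_2,\mathbb{R}^n)$ there exist skew-symmetric matrices $A_1,A_2\in\mathbb{R}^{n\times n}$ with $\|\nabla\mathbf{U}-A_1\|_{L^2(D_1)}\le K_1\|e(\mathbf{U})\|_{L^2(D_1)}$ and $\|\nabla\mathbf{U}-A_2\|_{L^2(D_2)}\le K_2\|e(\mathbf{U})\|_{L^2(D_2)}$. Then there exists a constant $C>0$ depending only on $K_1,K_2$ and the ratio $|D_2|/|D_1|$, such that for every $\mathbf{U}\in H^1(D_2,\mathbb{R}^n)$, $\|\nabla\mathbf{U}\|_{L^2(D_2)} \le C\big(\|\nabla\mathbf{U}\|_{L^2(D_1)} + \|e(\mathbf{U})\|_{L^2(D_2)}\big)$. -/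

import Mathlib

open MeasureTheory Matrix

/-- The gradient matrix of a vector field `U : ℝⁿ → ℝⁿ`. -/
noncomputable def gradMat (n : ℕ) (U : EuclideanSpace ℝ (Fin n) → EuclideanSpace ℝ (Fin n))
    (x : EuclideanSpace ℝ (Fin n)) : Matrix (Fin n) (Fin n) ℝ :=
  fun i j => fderiv ℝ (fun y => U y i) x (EuclideanSpace.single j (1 : ℝ))

/-- Squared Frobenius norm of a matrix. -/
def matSq {n : ℕ} (M : Matrix (Fin n) (Fin n) ℝ) : ℝ := ∑ i, ∑ j, (M i j) ^ 2

/-- Symmetric part of a matrix (the symmetrized gradient when applied to `gradMat`). -/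
noncomputable def symP {n : ℕ} (M : Matrix (Fin n) (Fin n) ℝ) : Matrix (Fin n) (Fin n) ℝ :=
  (1 / 2 : ℝ) • (M + Mᵀ)

namespace KornAux

open ENNReal

variable {n : ℕ}

lemma matSq_nonneg (M : Matrix (Fin n) (Fin n) ℝ) : 0 ≤ matSq M :=
  Finset.sum_nonneg fun _ _ => Finset.sum_nonneg fun _ _ => sq_nonneg _

noncomputable def emb (M : Matrix (Fin n) (Fin n) ℝ) : EuclideanSpace ℝ (Fin n × Fin n) :=
  WithLp.toLp 2 (fun p => M p.1 p.2)

lemma norm_emb (M : Matrix (Fin n) (Fin n) ℝ) : ‖emb M‖ = Real.sqrt (matSq M) := by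
  rw [EuclideanSpace.norm_eq]
  congr 1
  rw [matSq, Fintype.sum_prod_type]
  exact Finset.sum_congr rfl fun i _ => Finset.sum_congr rfl fun j _ => by
    simp [emb, sq_abs]

lemma sqrt_matSq_triangle (M N : Matrix (Fin n) (Fin n) ℝ) :
    Real.sqrt (matSq (M + N)) ≤ Real.sqrt (matSq M) + Real.sqrt (matSq N) := by
  rw [← norm_emb, ← norm_emb, ← norm_emb]
  have : emb (M + N) = emb M + emb N := by
    ext p; simp [emb]
  rw [this]
  exact norm_add_le _ _

lemma matSq_symP_le (M : Matrix (Fin n) (Fin n) ℝ) : matSq (symP M) ≤ matSq M := by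
  have h : matSq (symP M) ≤ ∑ i, ∑ j, (((M i j) ^ 2 + (M j i) ^ 2) / 2) := by
    refine Finset.sum_le_sum fun i _ => Finset.sum_le_sum fun j _ => ?_
    have : symP M i j = (1/2 : ℝ) * (M i j + M j i) := by
      simp [symP, Matrix.transpose_apply]
    rw [this]; nlinarith [sq_nonneg (M i j - M j i)]
  refine h.trans_eq ?_
  calc ∑ i, ∑ j, (((M i j) ^ 2 + (M j i) ^ 2) / 2)
      = (∑ i, ∑ j, (M i j) ^ 2) / 2 + (∑ i, ∑ j, (M j i) ^ 2) / 2 := by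
        simp [Finset.sum_div, Finset.sum_add_distrib, add_div]
    _ = matSq M := by
        rw [Finset.sum_comm (f := fun i j => (M j i)^2)]
        rw [matSq]; ring

lemma matSq_sub_comm (M N : Matrix (Fin n) (Fin n) ℝ) : matSq (M - N) = matSq (N - M) := by
  unfold matSq
  exact Finset.sum_congr rfl fun i _ => Finset.sum_congr rfl fun j _ => by
    simp [Matrix.sub_apply]; ring

lemma matSq_sub_le (M A : Matrix (Fin n) (Fin n) ℝ) :
    matSq (M - A) ≤ 2 * matSq M + 2 * matSq A := by
  have h : matSq (M - A) ≤ ∑ i, ∑ j, (2 * (M i j) ^ 2 + 2 * (A i j) ^ 2) := by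
    refine Finset.sum_le_sum fun i _ => Finset.sum_le_sum fun j _ => ?_
    simp only [Matrix.sub_apply]; nlinarith [sq_nonneg (M i j + A i j)]
  refine h.trans_eq ?_
  simp [matSq, Finset.sum_add_distrib, Finset.mul_sum]

lemma measurable_matSq {α} [MeasurableSpace α] {F : α → Matrix (Fin n) (Fin n) ℝ}
    (h : ∀ i j, Measurable fun x => F x i j) : Measurable fun x => matSq (F x) := by
  unfold matSq
  exact Finset.measurable_sum _ fun i _ => Finset.measurable_sum _ fun j _ =>
    (h i j).pow_const 2

lemma measurable_grad_entry (U : EuclideanSpace ℝ (Fin n) → EuclideanSpace ℝ (Fin n))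
    (i j : Fin n) : Measurable fun x => gradMat n U x i j :=
  measurable_fderiv_apply_const ℝ _ _

variable {α : Type*} [MeasurableSpace α]

noncomputable def L2M (μ : Measure α) (s : Set α) (F : α → Matrix (Fin n) (Fin n) ℝ) : ℝ≥0∞ :=
  (∫⁻ x in s, ENNReal.ofReal (matSq (F x)) ∂μ) ^ (1 / 2 : ℝ)

lemma ofReal_sqrt_sq (a : ℝ) (ha : 0 ≤ a) :
    (ENNReal.ofReal (Real.sqrt a)) ^ (2 : ℝ) = ENNReal.ofReal a := by
  rw [ENNReal.ofReal_rpow_of_nonneg (Real.sqrt_nonneg a) (by norm_num)]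
  congr 1
  rw [show (2:ℝ) = ((2:ℕ):ℝ) by norm_num, Real.rpow_natCast, Real.sq_sqrt ha]

lemma L2M_add_le (μ : Measure α) (s : Set α) (F G : α → Matrix (Fin n) (Fin n) ℝ)
    (hF : Measurable fun x => matSq (F x)) (hG : Measurable fun x => matSq (G x)) :
    L2M μ s (fun x => F x + G x) ≤ L2M μ s F + L2M μ s G := by
  set f : α → ℝ≥0∞ := fun x => ENNReal.ofReal (Real.sqrt (matSq (F x))) with hf
  set g : α → ℝ≥0∞ := fun x => ENNReal.ofReal (Real.sqrt (matSq (G x))) with hg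
  have hfm : AEMeasurable f (μ.restrict s) :=
    (ENNReal.measurable_ofReal.comp (hF.sqrt)).aemeasurable
  have hgm : AEMeasurable g (μ.restrict s) :=
    (ENNReal.measurable_ofReal.comp (hG.sqrt)).aemeasurable
  have key := ENNReal.lintegral_Lp_add_le hfm hgm (one_le_two)
  have hfe : ∀ x, f x ^ (2:ℝ) = ENNReal.ofReal (matSq (F x)) := fun x =>
    ofReal_sqrt_sq _ (matSq_nonneg _)
  have hge : ∀ x, g x ^ (2:ℝ) = ENNReal.ofReal (matSq (G x)) := fun x =>
    ofReal_sqrt_sq _ (matSq_nonneg _)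
  have hlhs : (∫⁻ x in s, ENNReal.ofReal (matSq (F x + G x)) ∂μ)
      ≤ ∫⁻ x in s, (f x + g x) ^ (2:ℝ) ∂μ := by
    refine lintegral_mono fun x => ?_
    have h1 : ENNReal.ofReal (matSq (F x + G x))
        = (ENNReal.ofReal (Real.sqrt (matSq (F x + G x)))) ^ (2:ℝ) :=
      (ofReal_sqrt_sq _ (matSq_nonneg _)).symm
    rw [h1]
    refine ENNReal.rpow_le_rpow ?_ (by norm_num)
    rw [hf, hg, ← ENNReal.ofReal_add (Real.sqrt_nonneg _) (Real.sqrt_nonneg _)]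
    exact ENNReal.ofReal_le_ofReal (sqrt_matSq_triangle _ _)
  calc L2M μ s (fun x => F x + G x)
      ≤ (∫⁻ x in s, (f x + g x) ^ (2:ℝ) ∂μ) ^ (1/2:ℝ) :=
        ENNReal.rpow_le_rpow hlhs (by norm_num)
    _ ≤ (∫⁻ x in s, f x ^ (2:ℝ) ∂μ) ^ (1/2:ℝ) + (∫⁻ x in s, g x ^ (2:ℝ) ∂μ) ^ (1/2:ℝ) := key
    _ = L2M μ s F + L2M μ s G := by
        unfold L2M
        simp only [hfe, hge]

lemma L2M_mono_set (μ : Measure α) {s t : Set α} (hst : s ⊆ t)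
    (F : α → Matrix (Fin n) (Fin n) ℝ) : L2M μ s F ≤ L2M μ t F :=
  ENNReal.rpow_le_rpow (lintegral_mono_set hst) (by norm_num)

lemma L2M_const (μ : Measure α) (s : Set α) (A : Matrix (Fin n) (Fin n) ℝ) :
    L2M μ s (fun _ => A) = ENNReal.ofReal (Real.sqrt (matSq A)) * (μ s) ^ (1/2:ℝ) := by
  unfold L2M
  rw [setLIntegral_const, ENNReal.mul_rpow_of_nonneg _ _ (by norm_num)]
  congr 1
  rw [ENNReal.ofReal_rpow_of_nonneg (matSq_nonneg A) (by norm_num), Real.sqrt_eq_rpow]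

lemma L2M_toReal (μ : Measure α) (s : Set α) (F : α → Matrix (Fin n) (Fin n) ℝ)
    (hInt : IntegrableOn (fun x => matSq (F x)) s μ) :
    (L2M μ s F).toReal = Real.sqrt (∫ x in s, matSq (F x) ∂μ) := by
  have h := ofReal_integral_eq_lintegral_ofReal hInt
    (Filter.Eventually.of_forall fun x => matSq_nonneg (F x))
  unfold L2M
  rw [← h, ← ENNReal.toReal_rpow, ENNReal.toReal_ofReal (integral_nonneg fun x => matSq_nonneg _),
    Real.sqrt_eq_rpow]

lemma L2M_lt_top (μ : Measure α) (s : Set α) (F : α → Matrix (Fin n) (Fin n) ℝ)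
    (hInt : IntegrableOn (fun x => matSq (F x)) s μ) : L2M μ s F < ⊤ := by
  unfold L2M
  refine ENNReal.rpow_lt_top_of_nonneg (by norm_num) ?_
  exact hInt.lintegral_lt_top.ne

end KornAux

open KornAux ENNReal in
/-- Propagation of Korn's first inequality from a subdomain to the whole domain
(Lemma 5.2 of the paper): if Korn's first inequality holds on `D₁ ⊆ D₂` with constants
`K₁, K₂`, then `‖∇U‖_{L²(D₂)} ≤ C(‖∇U‖_{L²(D₁)} + ‖e(U)‖_{L²(D₂)})` for every
`U ∈ H¹(D₂, ℝⁿ)`. -/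
theorem korn_propagation (n : ℕ)
    (D1 D2 : Set (EuclideanSpace ℝ (Fin n)))
    (hsub : D1 ⊆ D2) (hO1 : IsOpen D1) (hO2 : IsOpen D2)
    (hB : Bornology.IsBounded D2) (hc1 : IsConnected D1) (hc2 : IsConnected D2)
    (hLip1 : (volume D1).toReal ≠ 0) (hLip2 : (volume D2).toReal ≠ 0)
    (K1 K2 : ℝ) (hK1 : 0 < K1) (hK2 : 0 < K2)
    (korn : ∀ U : EuclideanSpace ℝ (Fin n) → EuclideanSpace ℝ (Fin n),
      ContDiffOn ℝ 1 U D2 → IntegrableOn (fun x => matSq (gradMat n U x)) D2 →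
      ∃ A1 A2 : Matrix (Fin n) (Fin n) ℝ, A1ᵀ = -A1 ∧ A2ᵀ = -A2 ∧
        Real.sqrt (∫ x in D1, matSq (gradMat n U x - A1)) ≤
          K1 * Real.sqrt (∫ x in D1, matSq (symP (gradMat n U x))) ∧
        Real.sqrt (∫ x in D2, matSq (gradMat n U x - A2)) ≤
          K2 * Real.sqrt (∫ x in D2, matSq (symP (gradMat n U x)))) :
    ∃ C > 0, ∀ U : EuclideanSpace ℝ (Fin n) → EuclideanSpace ℝ (Fin n),
      ContDiffOn ℝ 1 U D2 → IntegrableOn (fun x => matSq (gradMat n U x)) D2 →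
      Real.sqrt (∫ x in D2, matSq (gradMat n U x)) ≤
        C * (Real.sqrt (∫ x in D1, matSq (gradMat n U x))
             + Real.sqrt (∫ x in D2, matSq (symP (gradMat n U x)))) := by
  classical
  set v1 : ℝ≥0∞ := volume D1 with hv1def
  set v2 : ℝ≥0∞ := volume D2 with hv2def
  have hv1ne : v1 ≠ 0 := fun h => hLip1 (by rw [h, ENNReal.toReal_zero])
  have hv1top : v1 ≠ ⊤ := fun h => hLip1 (by rw [h, ENNReal.toReal_top])
  have hv2top : v2 ≠ ⊤ := fun h => hLip2 (by rw [h, ENNReal.toReal_top])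
  -- the ratio
  set ρ : ℝ≥0∞ := (v2 / v1) ^ (1/2:ℝ) with hρdef
  have hρtop : ρ ≠ ⊤ :=
    (ENNReal.rpow_lt_top_of_nonneg (by norm_num) (ENNReal.div_lt_top hv2top hv1ne).ne).ne
  set r : ℝ := ρ.toReal with hrdef
  have hr0 : 0 ≤ r := ENNReal.toReal_nonneg
  have hρ : ρ = ENNReal.ofReal r := (ENNReal.ofReal_toReal hρtop).symm
  set C : ℝ := (K2 + 1) * (1 + r) with hCdef
  have hC0 : 0 < C := by positivity
  refine ⟨C, hC0, fun U hU hInt => ?_⟩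
  set G : EuclideanSpace ℝ (Fin n) → Matrix (Fin n) (Fin n) ℝ := fun x => gradMat n U x with hGdef
  -- measurability
  have hmG : Measurable fun x => matSq (G x) :=
    measurable_matSq fun i j => measurable_grad_entry U i j
  have hmS : Measurable fun x => matSq (symP (G x)) := by
    refine measurable_matSq fun i j => ?_
    simp only [symP, Matrix.smul_apply, Matrix.add_apply, Matrix.transpose_apply, smul_eq_mul]
    exact ((measurable_grad_entry U i j).add (measurable_grad_entry U j i)).const_mul _
  have hmA : ∀ A : Matrix (Fin n) (Fin n) ℝ, Measurable fun x => matSq (G x - A) := by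
    intro A
    refine measurable_matSq fun i j => ?_
    simp only [Matrix.sub_apply]
    exact (measurable_grad_entry U i j).sub measurable_const
  -- integrability
  have hInt1 : IntegrableOn (fun x => matSq (G x)) D1 := hInt.mono_set hsub
  have hIntS : IntegrableOn (fun x => matSq (symP (G x))) D2 := by
    refine Integrable.mono hInt hmS.aestronglyMeasurable ?_
    refine Filter.Eventually.of_forall fun x => ?_
    rw [Real.norm_eq_abs, Real.norm_eq_abs, abs_of_nonneg (matSq_nonneg _),
      abs_of_nonneg (matSq_nonneg _)]
    exact matSq_symP_le _
  have hIntSub : ∀ A : Matrix (Fin n) (Fin n) ℝ,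
      IntegrableOn (fun x => matSq (G x - A)) D2 := by
    intro A
    have hconst : IntegrableOn (fun _ : EuclideanSpace ℝ (Fin n) => matSq A) D2 :=
      integrableOn_const hv2top
    have hg : Integrable (fun x => 2 * matSq (G x) + 2 * matSq A) (volume.restrict D2) :=
      (hInt.const_mul 2).add (hconst.const_mul 2)
    refine Integrable.mono' hg (hmA A).aestronglyMeasurable ?_
    refine Filter.Eventually.of_forall fun x => ?_
    rw [Real.norm_eq_abs, abs_of_nonneg (matSq_nonneg _)]
    exact matSq_sub_le _ _
  -- apply Korn
  obtain ⟨A1, A2, -, -, -, hK⟩ := korn U hU hInt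
  -- ℝ≥0∞ quantities
  set E : ℝ≥0∞ := L2M volume D2 (fun x => symP (G x)) with hEdef
  set g1 : ℝ≥0∞ := L2M volume D1 G with hg1def
  set g2 : ℝ≥0∞ := L2M volume D2 G with hg2def
  set W : ℝ≥0∞ := L2M volume D2 (fun x => G x - A2) with hWdef
  have hEtop : E ≠ ⊤ := (L2M_lt_top _ _ _ hIntS).ne
  have hg1top : g1 ≠ ⊤ := (L2M_lt_top _ _ _ hInt1).ne
  have hg2top : g2 ≠ ⊤ := (L2M_lt_top _ _ _ hInt).ne
  have hWtop : W ≠ ⊤ := (L2M_lt_top _ _ _ (hIntSub A2)).ne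
  have hEt : E.toReal = Real.sqrt (∫ x in D2, matSq (symP (G x))) := L2M_toReal _ _ _ hIntS
  have hg1t : g1.toReal = Real.sqrt (∫ x in D1, matSq (G x)) := L2M_toReal _ _ _ hInt1
  have hg2t : g2.toReal = Real.sqrt (∫ x in D2, matSq (G x)) := L2M_toReal _ _ _ hInt
  have hWt : W.toReal = Real.sqrt (∫ x in D2, matSq (G x - A2)) := L2M_toReal _ _ _ (hIntSub A2)
  set k : ℝ≥0∞ := ENNReal.ofReal K2 with hkdef
  -- Korn consequence: W ≤ k * E
  have hW_le : W ≤ k * E := by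
    have h1 : W.toReal ≤ K2 * E.toReal := by rw [hWt, hEt]; exact hK
    calc W = ENNReal.ofReal W.toReal := (ENNReal.ofReal_toReal hWtop).symm
      _ ≤ ENNReal.ofReal (K2 * E.toReal) := ENNReal.ofReal_le_ofReal h1
      _ = k * ENNReal.ofReal E.toReal := ENNReal.ofReal_mul hK2.le
      _ = k * E := by rw [ENNReal.ofReal_toReal hEtop]
  set a : ℝ≥0∞ := ENNReal.ofReal (Real.sqrt (matSq A2)) with hadef
  -- step 1 : g2 ≤ W + a * v2^(1/2)
  have step1 : g2 ≤ W + a * v2 ^ (1/2:ℝ) := by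
    calc g2 = L2M volume D2 (fun x => (G x - A2) + (fun _ => A2) x) := by
          rw [hg2def]
          exact congrArg (L2M volume D2) (funext fun x => (sub_add_cancel _ _).symm)
      _ ≤ L2M volume D2 (fun x => G x - A2)
          + L2M volume D2 (fun _ => A2) :=
          L2M_add_le _ _ _ _ (hmA A2) (measurable_matSq fun i j => measurable_const)
      _ = W + a * v2 ^ (1/2:ℝ) := by rw [L2M_const]
  -- step 3 : a * v1^(1/2) ≤ k * E + g1
  have step3 : a * v1 ^ (1/2:ℝ) ≤ k * E + g1 := by
    have hcomm : L2M volume D1 (fun x => A2 - G x) = L2M volume D1 (fun x => G x - A2) := by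
      unfold L2M
      congr 1
      exact lintegral_congr fun x => by rw [matSq_sub_comm]
    have hmA' : Measurable fun x => matSq (A2 - G x) := by
      have : (fun x => matSq (A2 - G x)) = fun x => matSq (G x - A2) :=
        funext fun x => matSq_sub_comm _ _
      rw [this]; exact hmA A2
    calc a * v1 ^ (1/2:ℝ) = L2M volume D1 (fun _ => A2) := (L2M_const _ _ _).symm
      _ = L2M volume D1 (fun x => (A2 - G x) + G x) :=
          congrArg (L2M volume D1) (funext fun x => (sub_add_cancel _ _).symm)
      _ ≤ L2M volume D1 (fun x => A2 - G x) + g1 := L2M_add_le _ _ _ _ hmA' hmG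
      _ = L2M volume D1 (fun x => G x - A2) + g1 := by rw [hcomm]
      _ ≤ W + g1 := add_le_add_left (L2M_mono_set _ hsub _) _
      _ ≤ k * E + g1 := add_le_add_left hW_le _
  -- step 4 : v2^(1/2) = ρ * v1^(1/2)
  have step4 : v2 ^ (1/2:ℝ) = ρ * v1 ^ (1/2:ℝ) := by
    rw [hρdef, ← ENNReal.mul_rpow_of_nonneg _ _ (by norm_num : (0:ℝ) ≤ 1/2),
      ENNReal.div_mul_cancel hv1ne hv1top]
  -- combine
  have main : g2 ≤ k * E + (k * E + g1) * ρ := by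
    calc g2 ≤ W + a * v2 ^ (1/2:ℝ) := step1
      _ ≤ k * E + a * v2 ^ (1/2:ℝ) := add_le_add_left hW_le _
      _ = k * E + (a * v1 ^ (1/2:ℝ)) * ρ := by rw [step4]; ring
      _ ≤ k * E + (k * E + g1) * ρ := add_le_add_right (mul_le_mul_left step3 ρ) _
  set S : ℝ≥0∞ := g1 + E with hSdef
  have bound : k * E + (k * E + g1) * ρ ≤ (k + 1) * (1 + ρ) * S := by
    have h1 : k * E ≤ (k + 1) * S :=
      mul_le_mul' (self_le_add_right k 1) (le_add_self)
    have h2 : k * E + g1 ≤ (k + 1) * S := by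
      calc k * E + g1 ≤ k * S + 1 * S :=
            add_le_add (mul_le_mul_right le_add_self k) (by rw [one_mul]; exact le_self_add)
        _ = (k + 1) * S := by ring
    calc k * E + (k * E + g1) * ρ ≤ (k + 1) * S + ((k + 1) * S) * ρ :=
          add_le_add h1 (mul_le_mul_left h2 ρ)
      _ = (k + 1) * (1 + ρ) * S := by ring
  have hCof : ENNReal.ofReal C = (k + 1) * (1 + ρ) := by
    rw [hCdef, ENNReal.ofReal_mul (by positivity), ENNReal.ofReal_add hK2.le zero_le_one,
      ENNReal.ofReal_add zero_le_one hr0, ENNReal.ofReal_one, hρ]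
  have final : g2 ≤ ENNReal.ofReal C * S := by
    rw [hCof]; exact main.trans bound
  -- convert back to ℝ
  have hStop : S ≠ ⊤ := by
    rw [hSdef]; exact (ENNReal.add_lt_top.2 ⟨lt_top_iff_ne_top.2 hg1top,
      lt_top_iff_ne_top.2 hEtop⟩).ne
  have hfin : g2.toReal ≤ (ENNReal.ofReal C * S).toReal :=
    ENNReal.toReal_mono (ENNReal.mul_ne_top ENNReal.ofReal_ne_top hStop) final
  rw [ENNReal.toReal_mul, ENNReal.toReal_ofReal hC0.le, hSdef, ENNReal.toReal_add hg1top hEtop]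
    at hfin
  rw [hg2t, hg1t, hEt] at hfin
  exact hfin
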